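/- Let C be a finite set partitioned into parts 𝒦_C (at least 2 parts), and for parts A ≠ B let w⁺(A,B) ∈ [0, |A|·|B|] be symmetric nonnegative reals. For distinct parts K, K' define W(K,K') := ∑_{K'' ∈ 𝒦_C \ {K,K'}} |K''|·(w⁺(K,K'')/(|K||K''|))·(w⁺(K',K'')/(|K'||K''|)) + w⁺(K,K')/|K| + w⁺(K',K)/|K'|. Then W(K,K') ≥ w⁺(K, C\K)/|K| + w⁺(K', C\K')/|K'| − |C| + |K| + |K'|, where w⁺(K, C\K) := ∑_{K'' ≠ K} w⁺(K,K''). -/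

import Mathlib

/-- Main inequality chain of Lemma 4.9: W(K,K') is at least
w⁺(K,C\K)/|K| + w⁺(K',C\K')/|K'| − |C| + |K| + |K'|. -/
theorem stmt_18 {ι : Type*} [DecidableEq ι] (P : Finset ι) (hm : 2 ≤ P.card)
    (k : ι → ℕ) (hk : ∀ i ∈ P, 1 ≤ k i) (N : ℕ) (htotal : ∑ i ∈ P, k i = N)
    (w : ι → ι → ℝ) (hsymm : ∀ i j, w i j = w j i)
    (hw0 : ∀ i ∈ P, ∀ j ∈ P, i ≠ j → 0 ≤ w i j)
    (hw1 : ∀ i ∈ P, ∀ j ∈ P, i ≠ j → w i j ≤ (k i : ℝ) * (k j : ℝ)) :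
    ∀ K ∈ P, ∀ K' ∈ P, K ≠ K' →
      (∑ K'' ∈ (P.erase K).erase K',
          (k K'' : ℝ) * (w K K'' / ((k K : ℝ) * (k K'' : ℝ)))
            * (w K' K'' / ((k K' : ℝ) * (k K'' : ℝ))))
          + w K K' / (k K : ℝ) + w K' K / (k K' : ℝ)
        ≥ (∑ K'' ∈ P.erase K, w K K'') / (k K : ℝ)
            + (∑ K'' ∈ P.erase K', w K' K'') / (k K' : ℝ)
            - (N : ℝ) + (k K : ℝ) + (k K' : ℝ) := by
  intro K hK K' hK' hne
  set S := (P.erase K).erase K' with hS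
  have hKpos : (0:ℝ) < k K := by exact_mod_cast hk K hK
  have hK'pos : (0:ℝ) < k K' := by exact_mod_cast hk K' hK'
  -- pointwise bound
  have hpt : ∀ i ∈ S,
      w K i / (k K : ℝ) + w K' i / (k K' : ℝ) - (k i : ℝ)
        ≤ (k i : ℝ) * (w K i / ((k K : ℝ) * (k i : ℝ)))
            * (w K' i / ((k K' : ℝ) * (k i : ℝ))) := by
    intro i hi
    have hiP : i ∈ P := Finset.mem_of_mem_erase (Finset.mem_of_mem_erase hi)
    have hiK : i ≠ K := Finset.ne_of_mem_erase (Finset.mem_of_mem_erase hi)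
    have hiK' : i ≠ K' := Finset.ne_of_mem_erase hi
    have hipos : (0:ℝ) < k i := by exact_mod_cast hk i hiP
    have h1 : 0 ≤ w K i := hw0 K hK i hiP (Ne.symm hiK)
    have h2 : w K i ≤ (k K : ℝ) * (k i : ℝ) := hw1 K hK i hiP (Ne.symm hiK)
    have h3 : 0 ≤ w K' i := hw0 K' hK' i hiP (Ne.symm hiK')
    have h4 : w K' i ≤ (k K' : ℝ) * (k i : ℝ) := hw1 K' hK' i hiP (Ne.symm hiK')
    have lhs_eq : w K i / (k K : ℝ) + w K' i / (k K' : ℝ) - (k i : ℝ)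
        = (w K i * (k K' : ℝ) + (k K : ℝ) * w K' i - (k i : ℝ) * ((k K : ℝ) * (k K' : ℝ)))
            / ((k K : ℝ) * (k K' : ℝ)) := by field_simp
    have hexp : (k i : ℝ) * (w K i / ((k K : ℝ) * (k i : ℝ)))
            * (w K' i / ((k K' : ℝ) * (k i : ℝ)))
        = w K i * w K' i / ((k K : ℝ) * (k K' : ℝ) * (k i : ℝ)) := by
      field_simp
    rw [hexp, lhs_eq, div_le_div_iff₀ (by positivity) (by positivity)]
    have hp : 0 ≤ ((k K : ℝ) * (k i : ℝ) - w K i) * ((k K' : ℝ) * (k i : ℝ) - w K' i) :=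
      mul_nonneg (sub_nonneg.2 h2) (sub_nonneg.2 h4)
    nlinarith [mul_nonneg (mul_pos hKpos hK'pos).le hp]
  have hsum := Finset.sum_le_sum hpt
  -- split divisions and reconcile sums
  have hsplit1 : (∑ K'' ∈ P.erase K, w K K'') = (∑ i ∈ S, w K i) + w K K' := by
    rw [hS]
    have h1 : K' ∈ P.erase K := Finset.mem_erase.mpr ⟨Ne.symm hne, hK'⟩
    rw [← Finset.add_sum_erase _ _ h1]; ring
  have hScomm : (P.erase K').erase K = S := by rw [hS, Finset.erase_right_comm]
  have hsplit2 : (∑ K'' ∈ P.erase K', w K' K'') = (∑ i ∈ S, w K' i) + w K' K := by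
    have h1 : K ∈ P.erase K' := Finset.mem_erase.mpr ⟨hne, hK⟩
    rw [← Finset.add_sum_erase _ _ h1, hScomm]; ring
  have hksum : (∑ i ∈ S, (k i : ℝ)) = (N : ℝ) - (k K : ℝ) - (k K' : ℝ) := by
    have h1 : K' ∈ P.erase K := Finset.mem_erase.mpr ⟨Ne.symm hne, hK'⟩
    have e1 : (∑ i ∈ P, (k i : ℝ)) = (N : ℝ) := by exact_mod_cast congrArg (Nat.cast : ℕ → ℝ) htotal
    rw [← Finset.add_sum_erase _ _ hK, ← Finset.add_sum_erase _ _ h1] at e1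
    rw [hS]; linarith
  have hsum2 : ∑ i ∈ S, (w K i / (k K : ℝ) + w K' i / (k K' : ℝ) - (k i : ℝ))
      = (∑ i ∈ S, w K i) / (k K : ℝ) + (∑ i ∈ S, w K' i) / (k K' : ℝ)
        - ((N : ℝ) - (k K : ℝ) - (k K' : ℝ)) := by
    rw [Finset.sum_sub_distrib, Finset.sum_add_distrib, ← Finset.sum_div, ← Finset.sum_div, hksum]
  rw [hsum2] at hsum
  rw [ge_iff_le, hsplit1, hsplit2, add_div, add_div]
  linarith
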